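/- Let R be a commutative ring with a translation-invariant partial order on its additive group such that squares are positive (r² ≥ 0 for all r ∈ R) and such that every element s ∈ 1 + R⁺ is localizable (i.e., whenever r·s ≥ 0 for some r ∈ R, then r ≥ 0). Then R is localizable: for every r ∈ R there exists a localizable element s ∈ 1 + R⁺ with −s ≤ r ≤ s. (Indeed, s = 1 + 1 + 2r² works, using r ≤ (1+r)² and −r ≤ (1−r)².) -/

import Mathlib

/-- A commutative ring with translation-invariant partial order, squares positive,
and every element of `1 + R⁺` localizable, is localizable. -/
theorem stmt_0 (R : Type*) [CommRing R] [PartialOrder R]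
    [CovariantClass R R (· + ·) (· ≤ ·)]
    (hsq : ∀ r : R, 0 ≤ r ^ 2)
    (hloc : ∀ s : R, (∃ t : R, 0 ≤ t ∧ s = 1 + t) → ∀ r : R, 0 ≤ r * s → 0 ≤ r) :
    ∀ r : R, ∃ s : R, (∃ t : R, 0 ≤ t ∧ s = 1 + t) ∧
      (∀ r' : R, 0 ≤ r' * s → 0 ≤ r') ∧ -s ≤ r ∧ r ≤ s := by
  intro r
  have add_nn : ∀ a b : R, 0 ≤ a → 0 ≤ b → 0 ≤ a + b := by
    intro a b ha hb
    calc (0:R) ≤ a := ha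
      _ = a + 0 := (add_zero a).symm
      _ ≤ a + b := add_le_add_right hb a
  have h1 : (0:R) ≤ 1 := by simpa using hsq 1
  have hrr : (0:R) ≤ 1 + r ^ 2 := add_nn _ _ h1 (hsq r)
  set s : R := 2 + 2 * r ^ 2 with hs
  have ht : ∃ t : R, 0 ≤ t ∧ s = 1 + t := by
    refine ⟨1 + 2 * r ^ 2, ?_, by ring⟩
    exact le_of_le_of_eq (add_nn _ _ hrr (hsq r)) (by ring)
  have hloc2 : ∀ r' : R, 0 ≤ r' * 2 → 0 ≤ r' :=
    hloc 2 ⟨1, h1, by ring⟩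
  have key : ∀ x : R, 0 ≤ x ^ 2 + (1 + r ^ 2 + (1 + r ^ 2 + (1 + r ^ 2))) := by
    intro x
    exact add_nn _ _ (hsq x) (add_nn _ _ hrr (add_nn _ _ hrr hrr))
  have hsp : 0 ≤ s + r := by
    apply hloc2
    have := key (r + 1)
    calc (0:R) ≤ (r + 1) ^ 2 + (1 + r ^ 2 + (1 + r ^ 2 + (1 + r ^ 2))) := this
      _ = (s + r) * 2 := by rw [hs]; ring
  have hsm : 0 ≤ s - r := by
    apply hloc2
    have := key (r - 1)
    calc (0:R) ≤ (r - 1) ^ 2 + (1 + r ^ 2 + (1 + r ^ 2 + (1 + r ^ 2))) := this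
      _ = (s - r) * 2 := by rw [hs]; ring
  refine ⟨s, ht, hloc s ht, ?_, ?_⟩
  · calc -s = -s + 0 := (add_zero _).symm
      _ ≤ -s + (s + r) := add_le_add_right hsp _
      _ = r := by ring
  · calc r = r + 0 := (add_zero _).symm
      _ ≤ r + (s - r) := add_le_add_right hsm _
      _ = s := by ring
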